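/- Let ε ∈ {1, −1}. There do not exist integers a, b, c with gcd(a, b, c) = 1 such that ε·2·c² − a² − 15·b² = 0. -/

import Mathlib

/-- There are no coprime integers `a, b, c` with `±2c² − a² − 15b² = 0`. -/
theorem no_coprime_solution (ε : ℤ) (hε : ε = 1 ∨ ε = -1) :
    ¬ ∃ a b c : ℤ, Int.gcd (Int.gcd a b) c = 1 ∧
      ε * 2 * c ^ 2 - a ^ 2 - 15 * b ^ 2 = 0 := by
  rintro ⟨a, b, c, hg, heq⟩
  rcases hε with rfl | rfl
  · -- 2c² = a² + 15b²
    have key : ∀ x y : ZMod 3, x ^ 2 = 2 * y ^ 2 → x = 0 ∧ y = 0 := by decide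
    have h2 : a ^ 2 = 2 * c ^ 2 - 15 * b ^ 2 := by ring_nf; linarith
    have hz : ((a : ZMod 3)) ^ 2 = 2 * (c : ZMod 3) ^ 2 := by
      have := congrArg (Int.cast : ℤ → ZMod 3) h2
      push_cast at this
      rw [this]
      have h15 : ((15 : ℤ) : ZMod 3) = 0 := by decide
      push_cast [h15] at *
      ring_nf
      simp [show ((15 : ZMod 3)) = 0 from by decide]
    obtain ⟨ha0, hc0⟩ := key _ _ hz
    have ha3 : (3 : ℤ) ∣ a := by
      exact_mod_cast (ZMod.intCast_zmod_eq_zero_iff_dvd a 3).mp ha0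
    have hc3 : (3 : ℤ) ∣ c := by
      exact_mod_cast (ZMod.intCast_zmod_eq_zero_iff_dvd c 3).mp hc0
    obtain ⟨p, rfl⟩ := ha3
    obtain ⟨q, rfl⟩ := hc3
    have hb5 : (3 : ℤ) ∣ 5 * b ^ 2 := ⟨2 * q ^ 2 - p ^ 2, by linarith⟩
    have hb2 : (3 : ℤ) ∣ b ^ 2 :=
      (Int.prime_three.dvd_mul.mp hb5).resolve_left (by norm_num)
    have hb3 : (3 : ℤ) ∣ b := Int.prime_three.dvd_of_dvd_pow hb2
    have h31 : (3 : ℤ) ∣ (((Int.gcd (Int.gcd (3 * p) b : ℤ) (3 * q)) : ℕ) : ℤ) :=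
      Int.dvd_coe_gcd (Int.dvd_coe_gcd ⟨p, rfl⟩ hb3) ⟨q, rfl⟩
    rw [hg] at h31
    norm_num at h31
  · have ha : a = 0 := by nlinarith [sq_nonneg a, sq_nonneg b, sq_nonneg c]
    have hb : b = 0 := by nlinarith [sq_nonneg a, sq_nonneg b, sq_nonneg c]
    have hc : c = 0 := by nlinarith [sq_nonneg a, sq_nonneg b, sq_nonneg c]
    subst ha; subst hb; subst hc
    simp at hg
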